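/- Let w := (w_n)_{n∈ℤ} be a bounded sequence of nonzero scalars in 𝕂. The bilateral weighted backward shift B_w : (x_n)_{n∈ℤ} ∈ c₀(ℤ) ↦ (w_n x_{n+1})_{n∈ℤ} ∈ c₀(ℤ) is Li-Yorke chaotic if and only if both of the following hold: (a) liminf_{n→∞} |w_{-n} ⋯ w_{-1}| = 0; and (b) sup{ |w_i ⋯ w_j| : i, j ∈ ℤ, i ≤ j } = ∞. -/

import Mathlib

open Filter Topology MeasureTheory ENNReal

noncomputable section

def LiYorkePair {M : Type*} [PseudoMetricSpace M] (g : M → M) (x y : M) : Prop :=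
  Filter.liminf (fun n : ℕ => edist (g^[n] x) (g^[n] y)) Filter.atTop = 0 ∧
  0 < Filter.limsup (fun n : ℕ => edist (g^[n] x) (g^[n] y)) Filter.atTop

def LiYorkeChaotic {M : Type*} [PseudoMetricSpace M] (g : M → M) : Prop :=
  ∃ S : Set M, ¬ S.Countable ∧ S.Pairwise (LiYorkePair g)

def DenselyLiYorkeChaotic {M : Type*} [PseudoMetricSpace M] (g : M → M) : Prop :=
  ∃ S : Set M, Dense S ∧ ¬ S.Countable ∧ S.Pairwise (LiYorkePair g)

namespace LYBS

variable {𝕂 : Type} [RCLike 𝕂]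

def Q (w : ℤ → 𝕂) (i j : ℤ) : 𝕂 := ∏ t ∈ Finset.Icc i j, w t

lemma Icc_eq_Ioc (a b : ℤ) : Finset.Icc a b = Finset.Ioc (a - 1) b := by
  ext t; simp only [Finset.mem_Icc, Finset.mem_Ioc]; omega

lemma Q_mul (w : ℤ → 𝕂) {a b c : ℤ} (h1 : a - 1 ≤ b) (h2 : b ≤ c) :
    Q w a b * Q w (b + 1) c = Q w a c := by
  unfold Q
  rw [Icc_eq_Ioc, Icc_eq_Ioc, Icc_eq_Ioc, show b + 1 - 1 = b by ring,
    ← Finset.prod_union (by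
      rw [Finset.disjoint_left]; intro t ht ht'
      simp only [Finset.mem_Ioc] at ht ht'; omega),
    Finset.Ioc_union_Ioc_eq_Ioc h1 (le_trans h2 (by omega))]

lemma Q_ne_zero {w : ℤ → 𝕂} (hw0 : ∀ n, w n ≠ 0) (i j : ℤ) : Q w i j ≠ 0 :=
  Finset.prod_ne_zero_iff.mpr fun t _ => hw0 t

lemma Q_norm_pos {w : ℤ → 𝕂} (hw0 : ∀ n, w n ≠ 0) (i j : ℤ) : 0 < ‖Q w i j‖ :=
  norm_pos_iff.mpr (Q_ne_zero hw0 i j)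

lemma Q_norm_le {w : ℤ → 𝕂} {C : ℝ} (hC : ∀ n, ‖w n‖ ≤ C) (hC0 : 0 ≤ C) (i j : ℤ) :
    ‖Q w i j‖ ≤ C ^ (j + 1 - i).toNat := by
  calc ‖Q w i j‖ ≤ ∏ t ∈ Finset.Icc i j, ‖w t‖ := le_of_eq (norm_prod _ _)
    _ ≤ ∏ _t ∈ Finset.Icc i j, C :=
        Finset.prod_le_prod (fun t _ => norm_nonneg _) (fun t _ => hC t)
    _ = C ^ (j + 1 - i).toNat := by rw [Finset.prod_const, Int.card_Icc]


lemma Q_single (w : ℤ → 𝕂) (k : ℤ) : Q w k k = w k := by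
  unfold Q; rw [Finset.Icc_self, Finset.prod_singleton]

lemma Q_empty (w : ℤ → 𝕂) {i j : ℤ} (h : j < i) : Q w i j = 1 := by
  unfold Q; rw [Finset.Icc_eq_empty (by omega), Finset.prod_empty]

abbrev X (𝕂 : Type) [RCLike 𝕂] := ZeroAtInftyContinuousMap ℤ 𝕂

lemma iter_apply (w : ℤ → 𝕂) (T : X 𝕂 → X 𝕂) (hT : ∀ x n, T x n = w n * x (n + 1)) :
    ∀ (n : ℕ) (x : X 𝕂) (k : ℤ), (T^[n] x) k = Q w k (k + n - 1) * x (k + n) := by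
  intro n
  induction n with
  | zero =>
    intro x k
    simp only [Function.iterate_zero, id_eq, Nat.cast_zero, add_zero]
    rw [Q_empty w (by omega), one_mul]
  | succ n ih =>
    intro x k
    rw [Function.iterate_succ_apply, ih (T x) k, hT]
    rw [show Q w k (k + (n:ℕ) - 1) * (w (k + (n:ℕ)) * x (k + (n:ℕ) + 1))
        = (Q w k (k + (n:ℕ) - 1) * Q w (k + (n:ℕ) - 1 + 1) (k + (n:ℕ))) * x (k + (n:ℕ) + 1) by
      rw [show k + (n:ℕ) - 1 + 1 = k + (n:ℕ) by ring, Q_single]; ring]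
    rw [Q_mul w (by omega) (by omega)]
    push_cast
    ring_nf

lemma coord_le (x : X 𝕂) (k : ℤ) : ‖x k‖ ≤ ‖x‖ := by
  rw [← ZeroAtInftyContinuousMap.norm_toBCF_eq_norm]
  exact BoundedContinuousFunction.norm_coe_le_norm x.toBCF k

lemma norm_le_of (x : X 𝕂) {M : ℝ} (hM : 0 ≤ M) (h : ∀ k, ‖x k‖ ≤ M) : ‖x‖ ≤ M := by
  rw [← ZeroAtInftyContinuousMap.norm_toBCF_eq_norm]
  exact (BoundedContinuousFunction.norm_le hM).mpr h

def mk (f : ℤ → 𝕂) (h : Tendsto f cofinite (𝓝 0)) : X 𝕂 :=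
  ⟨⟨f, continuous_of_discreteTopology⟩, by rwa [cocompact_eq_cofinite]⟩

@[simp] lemma mk_apply (f : ℤ → 𝕂) (h : Tendsto f cofinite (𝓝 0)) (k : ℤ) : mk f h k = f k := rfl


lemma Q_shift {w : ℤ → 𝕂} (hw0 : ∀ n, w n ≠ 0) (p : ℤ) :
    ∃ c : ℝ, 0 < c ∧ ∀ m : ℤ, |p| + 1 ≤ m →
      ‖Q w (p - m) (p - 1)‖ = c * ‖Q w (p - m) (-1)‖ := by
  rcases le_or_gt 0 p with hp | hp
  · rw [abs_of_nonneg hp]  at *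
    refine ⟨‖Q w 0 (p - 1)‖, Q_norm_pos hw0 _ _, fun m hm => ?_⟩
    have h := Q_mul w (a := p - m) (b := -1) (c := p - 1) (by omega) (by omega)
    rw [show (-1 : ℤ) + 1 = 0 by ring] at h
    rw [← h, norm_mul]
    ring
  · rw [abs_of_neg hp] at *
    refine ⟨‖Q w p (-1)‖⁻¹, inv_pos.mpr (Q_norm_pos hw0 _ _), fun m hm => ?_⟩
    have h := Q_mul w (a := p - m) (b := p - 1) (c := -1) (by omega) (by omega)
    rw [show p - 1 + 1 = p by ring] at h
    rw [← h, norm_mul, mul_comm (‖Q w p (-1)‖⁻¹), mul_assoc,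
      mul_inv_cancel₀ (ne_of_gt (Q_norm_pos hw0 _ _)), mul_one]

-- shift tendsto
lemma Q_shift_tendsto {w : ℤ → 𝕂} (hw0 : ∀ n, w n ≠ 0)
    (htend : Tendsto (fun n : ℕ => ‖Q w (-(n : ℤ)) (-1)‖) atTop (𝓝 0)) (p : ℤ) :
    Tendsto (fun n : ℕ => ‖Q w (p - (n : ℤ)) (p - 1)‖) atTop (𝓝 0) := by
  obtain ⟨c, hc, hcE⟩ := Q_shift hw0 p
  have hg : Tendsto (fun n : ℕ => ((n : ℤ) - p).toNat) atTop atTop := by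
    apply Filter.tendsto_atTop_atTop.mpr
    intro b
    exact ⟨b + p.natAbs, fun n hn => by omega⟩
  have base : Tendsto (fun n : ℕ => ‖Q w (-(((n : ℤ) - p).toNat : ℤ)) (-1)‖) atTop (𝓝 0) :=
    htend.comp hg
  have base2 : Tendsto (fun n : ℕ => ‖Q w (p - (n : ℤ)) (-1)‖) atTop (𝓝 0) := by
    refine base.congr' ?_
    filter_upwards [eventually_atTop.mpr ⟨p.natAbs, fun n hn => hn⟩] with n hn
    congr 2
    omega
  have final := base2.const_mul c
  rw [mul_zero] at final
  refine final.congr' ?_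
  filter_upwards [eventually_atTop.mpr ⟨(|p| + 1).toNat, fun n (hn : (|p|+1).toNat ≤ n) => hn⟩]
    with n hn
  exact (hcE n (by omega)).symm


section chaotic
variable (w : ℤ → 𝕂) (T : X 𝕂 → X 𝕂) (hT : ∀ x n, T x n = w n * x (n + 1))
include hT

lemma iter_sub (n : ℕ) (x y : X 𝕂) : T^[n] x - T^[n] y = T^[n] (x - y) := by
  ext k
  simp only [ZeroAtInftyContinuousMap.coe_sub, Pi.sub_apply]
  rw [iter_apply w T hT, iter_apply w T hT, iter_apply w T hT]
  simp only [ZeroAtInftyContinuousMap.coe_sub, Pi.sub_apply]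
  ring

lemma iter_smul (n : ℕ) (c : 𝕂) (x : X 𝕂) : T^[n] (c • x) = c • T^[n] x := by
  ext k
  rw [ZeroAtInftyContinuousMap.coe_smul, Pi.smul_apply, iter_apply w T hT,
    iter_apply w T hT, ZeroAtInftyContinuousMap.coe_smul, Pi.smul_apply, smul_eq_mul,
    smul_eq_mul]
  ring

lemma iter_zero_val (n : ℕ) : T^[n] (0 : X 𝕂) = 0 := by
  ext k
  rw [iter_apply w T hT]
  simp

lemma chaotic_of (z : X 𝕂)
    (H1 : ∀ δ : ℝ, 0 < δ → ∃ᶠ n in atTop, ‖T^[n] z‖ < δ)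
    (H2 : ∃ c : ℝ, 0 < c ∧ ∃ᶠ n in atTop, c ≤ ‖T^[n] z‖) :
    ∃ S : Set (X 𝕂), ¬ S.Countable ∧ S.Pairwise (LiYorkePair T) := by
  obtain ⟨c, hc, hfreq⟩ := H2
  have hz : z ≠ 0 := by
    obtain ⟨n, hn⟩ := hfreq.exists
    intro h
    rw [h, iter_zero_val w T hT, norm_zero] at hn
    linarith
  set f : ℝ → X 𝕂 := fun r => ((r : 𝕂) • z) with hf
  have hinj : Function.Injective f := by
    intro a b hab
    simp only [hf] at hab
    have h1 : ((a - b : ℝ) : 𝕂) • z = 0 := by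
      have hss : ((a:𝕂) - (b:𝕂)) • z = (a:𝕂) • z - (b:𝕂) • z := sub_smul (a:𝕂) (b:𝕂) z
      push_cast
      rw [hss, hab, sub_self]
    rcases (mul_eq_zero.mp (show ‖((a - b : ℝ) : 𝕂)‖ * ‖z‖ = 0 by
        rw [← norm_smul, h1, norm_zero])).imp norm_eq_zero.mp norm_eq_zero.mp with h | h
    · have := RCLike.ofReal_eq_zero.mp h
      linarith [abs_nonneg (a-b)]
    · exact absurd h hz
  set S := Set.range f with hS
  have key : ∀ (a b : ℝ) (n : ℕ),
      edist (T^[n] (f a)) (T^[n] (f b)) = ENNReal.ofReal (|a - b| * ‖T^[n] z‖) := by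
    intro a b n
    rw [edist_dist, dist_eq_norm, hf]
    simp only
    rw [iter_smul w T hT, iter_smul w T hT]
    have hss : ((a:𝕂) - (b:𝕂)) • (T^[n] z) = (a:𝕂) • (T^[n] z) - (b:𝕂) • (T^[n] z) :=
      sub_smul (a:𝕂) (b:𝕂) (T^[n] z)
    have hns : ‖((a:𝕂) - (b:𝕂)) • (T^[n] z)‖ = ‖(a:𝕂) - (b:𝕂)‖ * ‖T^[n] z‖ :=
      norm_smul ((a:𝕂) - (b:𝕂)) (T^[n] z)
    rw [← hss, hns, ← RCLike.ofReal_sub, RCLike.norm_ofReal]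
  refine ⟨S, ?_, ?_⟩
  · intro hcount
    have : (f ⁻¹' S).Countable := hcount.preimage hinj
    rw [hS, Set.preimage_range] at this
    exact Cardinal.not_countable_real this
  · rintro x ⟨a, rfl⟩ y ⟨b, rfl⟩ hne
    have hab : a ≠ b := fun h => hne (by rw [h])
    have hd : 0 < |a - b| := abs_pos.mpr (sub_ne_zero.mpr hab)
    constructor
    · refine le_antisymm ?_ zero_le
      have hto : Tendsto (fun q : ℕ => ENNReal.ofReal (|a - b| * (1 / (q + 1)))) atTop (𝓝 0) := by
        rw [show (0 : ℝ≥0∞) = ENNReal.ofReal (|a-b| * 0) by simp]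
        exact (ENNReal.continuous_ofReal.tendsto _).comp
          (tendsto_one_div_add_atTop_nhds_zero_nat.const_mul _)
      refine ge_of_tendsto hto (Eventually.of_forall fun q => ?_)
      refine liminf_le_of_frequently_le' ?_
      refine (H1 (1 / (q + 1)) (by positivity)).mono fun n hn => ?_
      rw [key]
      exact ENNReal.ofReal_le_ofReal (mul_le_mul_of_nonneg_left hn.le (abs_nonneg _))
    · refine lt_of_lt_of_le (b := ENNReal.ofReal (|a - b| * c))
        (ENNReal.ofReal_pos.mpr (by positivity))
        (le_limsup_of_frequently_le' (hfreq.mono fun n hn => ?_))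
      rw [key]
      exact ENNReal.ofReal_le_ofReal (mul_le_mul_of_nonneg_left hn (abs_nonneg _))

end chaotic

lemma exists_big (w : ℤ → 𝕂)
    (hb : (⨆ (i : ℤ) (j : ℤ) (_ : i ≤ j), (‖∏ t ∈ Finset.Icc i j, w t‖₊ : ℝ≥0∞)) = ⊤) :
    ∀ M : ℝ, ∃ i j : ℤ, i ≤ j ∧ M < ‖Q w i j‖ := by
  intro M
  by_contra h
  push_neg at h
  have hle : (⨆ (i : ℤ) (j : ℤ) (_ : i ≤ j), (‖∏ t ∈ Finset.Icc i j, w t‖₊ : ℝ≥0∞))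
      ≤ ENNReal.ofReal (max M 0) := by
    refine iSup_le fun i => iSup_le fun j => iSup_le fun hij => ?_
    rw [← enorm_eq_nnnorm, ← ofReal_norm]
    exact ENNReal.ofReal_le_ofReal (le_trans (h i j hij) (le_max_left _ _))
  rw [hb] at hle
  exact ENNReal.ofReal_ne_top (top_le_iff.mp hle)

lemma exists_big_avoid (w : ℤ → 𝕂) (hw0 : ∀ n, w n ≠ 0)
    (hb : (⨆ (i : ℤ) (j : ℤ) (_ : i ≤ j), (‖∏ t ∈ Finset.Icc i j, w t‖₊ : ℝ≥0∞)) = ⊤)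
    (M : ℝ) (F : Finset ℤ) : ∃ i j : ℤ, i ≤ j ∧ M ≤ ‖Q w i j‖ ∧ j + 1 ∉ F := by
  rcases F.eq_empty_or_nonempty with hF | hF
  · obtain ⟨i, j, hij, hM⟩ := exists_big w hb M
    exact ⟨i, j, hij, hM.le, by simp [hF]⟩
  · set t := F.max' hF + 1 with ht
    set d := F.inf' hF (fun a => ‖Q w a t‖) with hd
    have hdpos : 0 < d := by
      rw [hd, Finset.lt_inf'_iff]
      exact fun b _ => Q_norm_pos hw0 _ _
    have hmd : 0 < min d 1 := lt_min hdpos one_pos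
    obtain ⟨i, j, hij, hM⟩ := exists_big w hb (max (M / min d 1) M)
    by_cases hjF : j + 1 ∈ F
    · have hjt : j + 1 ≤ t - 1 := by
        have := F.le_max' _ hjF; omega
      refine ⟨i, t, by omega, ?_, ?_⟩
      · have hsplit := Q_mul w (a := i) (b := j) (c := t) (by omega) (by omega)
        rw [← hsplit, norm_mul]
        rcases le_or_gt M 0 with hM0 | hM0
        · exact le_trans hM0 (by positivity)
        · have h1 : M / min d 1 ≤ ‖Q w i j‖ := le_trans (le_max_left _ _) hM.le
          have h2 : min d 1 ≤ ‖Q w (j + 1) t‖ :=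
            le_trans (min_le_left _ _) (Finset.inf'_le _ hjF)
          calc M = (M / min d 1) * min d 1 := by field_simp
            _ ≤ ‖Q w i j‖ * ‖Q w (j + 1) t‖ :=
                mul_le_mul h1 h2 hmd.le (le_trans (by positivity) h1)
      · intro hc
        have := F.le_max' _ hc
        omega
    · exact ⟨i, j, hij, le_trans (le_max_right _ _) hM.le, hjF⟩

lemma exists_time {w : ℤ → 𝕂} (hw0 : ∀ n, w n ≠ 0)
    (htend : Tendsto (fun n : ℕ => ‖Q w (-(n : ℤ)) (-1)‖) atTop (𝓝 0))
    (bound : ℕ) (K : Finset (ℤ × ℤ)) (s : ℕ) : ∃ N : ℕ, bound < N ∧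
      ∀ q ∈ K, ‖Q w ((q.2 + 1) - (N : ℤ)) ((q.2 + 1) - 1)‖ * ‖Q w q.1 q.2‖⁻¹
        < 1 / (s + 1) := by
  have hall : ∀ᶠ N : ℕ in atTop, ∀ q ∈ K,
      ‖Q w ((q.2 + 1) - (N : ℤ)) ((q.2 + 1) - 1)‖ * ‖Q w q.1 q.2‖⁻¹ < 1 / (s + 1) := by
    rw [eventually_all_finset]
    intro q hq
    have h0 := (Q_shift_tendsto hw0 htend (q.2 + 1)).mul_const (‖Q w q.1 q.2‖⁻¹)
    rw [zero_mul] at h0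
    exact h0.eventually_lt_const (by positivity)
  obtain ⟨N, hN1, hN2⟩ := (hall.and (eventually_gt_atTop bound)).exists
  exact ⟨N, hN2, hN1⟩

def lyM (C' : ℝ) (s Np : ℕ) : ℝ := 2 ^ (s + 1) * C' ^ (Np + s + 1)

variable (fi fj : ℝ → Finset ℤ → ℤ) (fN : ℕ → Finset (ℤ × ℤ) → ℕ → ℕ) (C' : ℝ)

def lyStep (s : ℕ) (h : ℕ → ℤ × ℤ × ℕ) : ℕ → ℤ × ℤ × ℕ :=
  Function.update h (s + 1)
    (fi (lyM C' (s + 1) (h s).2.2) ((Finset.range (s + 1)).image fun t => (h t).2.1 + 1),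
     fj (lyM C' (s + 1) (h s).2.2) ((Finset.range (s + 1)).image fun t => (h t).2.1 + 1),
     fN (h s).2.2
       (insert
         (fi (lyM C' (s + 1) (h s).2.2) ((Finset.range (s + 1)).image fun t => (h t).2.1 + 1),
          fj (lyM C' (s + 1) (h s).2.2) ((Finset.range (s + 1)).image fun t => (h t).2.1 + 1))
         ((Finset.range (s + 1)).image fun t => ((h t).1, (h t).2.1)))
       (s + 1))

def lyBase : ℕ → ℤ × ℤ × ℕ :=
  fun _ => (fi (lyM C' 0 0) ∅, fj (lyM C' 0 0) ∅,
    fN 0 {(fi (lyM C' 0 0) ∅, fj (lyM C' 0 0) ∅)} 0)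

def lySeq : ℕ → ℕ → ℤ × ℤ × ℕ
  | 0 => lyBase fi fj fN C'
  | s + 1 => lyStep fi fj fN C' s (lySeq s)


lemma construct (w : ℤ → 𝕂) (hw0 : ∀ n, w n ≠ 0) {C' : ℝ}
    (hC' : ∀ n, ‖w n‖ ≤ C') (h2C : 2 ≤ C')
    (htend : Tendsto (fun n : ℕ => ‖Q w (-(n : ℤ)) (-1)‖) atTop (𝓝 0))
    (hb : (⨆ (i : ℤ) (j : ℤ) (_ : i ≤ j), (‖∏ t ∈ Finset.Icc i j, w t‖₊ : ℝ≥0∞)) = ⊤)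
    (T : X 𝕂 → X 𝕂) (hT : ∀ x n, T x n = w n * x (n + 1)) :
    ∃ z : X 𝕂, (∀ δ : ℝ, 0 < δ → ∃ᶠ n in atTop, ‖T^[n] z‖ < δ) ∧
      ∃ c : ℝ, 0 < c ∧ ∃ᶠ n in atTop, c ≤ ‖T^[n] z‖ := by
  classical
  have h1C : (1 : ℝ) < C' := by linarith
  have h0C : (0 : ℝ) < C' := by linarith
  choose fi fj hfle hfM hfF using exists_big_avoid w hw0 hb
  choose fN hfN1 hfN2 using exists_time hw0 htend
  set g : ℕ → ℤ × ℤ × ℕ := fun s => lySeq fi fj fN C' s s with hgdef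
  have hstab : ∀ s t, t ≤ s → lySeq fi fj fN C' s t = g t := by
    intro s
    induction s with
    | zero =>
      intro t ht
      rw [Nat.le_zero.mp ht]
    | succ s ih =>
      intro t ht
      rcases Nat.eq_or_lt_of_le ht with heq | hlt
      · rw [heq]
      · have h2 : t ≤ s := by omega
        have e : lySeq fi fj fN C' (s+1) t = lySeq fi fj fN C' s t := by
          show lyStep fi fj fN C' s (lySeq fi fj fN C' s) t = _
          unfold lyStep
          exact Function.update_of_ne (by omega) _ _
        rw [e, ih t h2]
  have hg0 : g 0 = (fi (lyM C' 0 0) ∅, fj (lyM C' 0 0) ∅,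
      fN 0 {(fi (lyM C' 0 0) ∅, fj (lyM C' 0 0) ∅)} 0) := rfl
  have hgs : ∀ s, g (s+1) =
      (fi (lyM C' (s+1) ((g s).2.2)) ((Finset.range (s+1)).image fun t => (g t).2.1 + 1),
       fj (lyM C' (s+1) ((g s).2.2)) ((Finset.range (s+1)).image fun t => (g t).2.1 + 1),
       fN ((g s).2.2)
         (insert
           (fi (lyM C' (s+1) ((g s).2.2)) ((Finset.range (s+1)).image fun t => (g t).2.1 + 1),
            fj (lyM C' (s+1) ((g s).2.2)) ((Finset.range (s+1)).image fun t => (g t).2.1 + 1))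
           ((Finset.range (s+1)).image fun t => ((g t).1, (g t).2.1)))
         (s+1)) := by
    intro s
    show lySeq fi fj fN C' (s+1) (s+1) = _
    have e0 : lySeq fi fj fN C' (s+1) (s+1)
        = lyStep fi fj fN C' s (lySeq fi fj fN C' s) (s+1) := rfl
    rw [e0]
    unfold lyStep
    rw [Function.update_self]
    have e1 : (Finset.range (s+1)).image (fun t => (lySeq fi fj fN C' s t).2.1 + 1)
        = (Finset.range (s+1)).image (fun t => (g t).2.1 + 1) :=
      Finset.image_congr fun t ht => by
        rw [hstab s t (by simpa using Nat.lt_succ_iff.mp (Finset.mem_range.mp ht))]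
    have e2 : (Finset.range (s+1)).image (fun t => ((lySeq fi fj fN C' s t).1,
          (lySeq fi fj fN C' s t).2.1))
        = (Finset.range (s+1)).image (fun t => ((g t).1, (g t).2.1)) :=
      Finset.image_congr fun t ht => by
        rw [hstab s t (by simpa using Nat.lt_succ_iff.mp (Finset.mem_range.mp ht))]
    have e3 : lySeq fi fj fN C' s s = g s := rfl
    rw [e1, e2, e3]
  -- invariants
  have hIle : ∀ s, (g s).1 ≤ (g s).2.1 := by
    intro s
    cases s with
    | zero => rw [hg0]; exact hfle _ _
    | succ s => rw [hgs s]; exact hfle _ _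
  have hIM : ∀ s, lyM C' (s+1) ((g s).2.2) ≤ ‖Q w (g (s+1)).1 (g (s+1)).2.1‖ := by
    intro s
    rw [hgs s]
    exact hfM _ _
  have hIM0 : lyM C' 0 0 ≤ ‖Q w (g 0).1 (g 0).2.1‖ := by
    rw [hg0]; exact hfM _ _
  have hIF : ∀ s t, t < s → (g t).2.1 + 1 ≠ (g s).2.1 + 1 := by
    intro s t hlt
    cases s with
    | zero => omega
    | succ u =>
      intro heq
      have hmem : (g t).2.1 + 1 ∈ (Finset.range (u+1)).image (fun t => (g t).2.1 + 1) :=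
        Finset.mem_image.mpr ⟨t, Finset.mem_range.mpr (by omega), rfl⟩
      have hne := hfF (lyM C' (u+1) ((g u).2.2))
        ((Finset.range (u+1)).image fun t => (g t).2.1 + 1)
      apply hne
      have e : (g (u+1)).2.1 = fj (lyM C' (u+1) ((g u).2.2))
          ((Finset.range (u+1)).image fun t => (g t).2.1 + 1) := by rw [hgs u]
      rw [← e, ← heq]
      exact hmem
  have hIN1 : ∀ s, (g s).2.2 < (g (s+1)).2.2 := by
    intro s
    have e3 : (g (s+1)).2.2 = fN ((g s).2.2)
        (insert ((g (s+1)).1, (g (s+1)).2.1)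
          ((Finset.range (s+1)).image fun t => ((g t).1, (g t).2.1))) (s+1) := by
      rw [hgs s]
    rw [e3]
    exact hfN1 _ _ _
  have hNmono : StrictMono (fun s => (g s).2.2) := strictMono_nat_of_lt_succ hIN1
  have hIN2 : ∀ s t, t ≤ s →
      ‖Q w (((g t).2.1 + 1) - ((g s).2.2 : ℤ)) (((g t).2.1 + 1) - 1)‖
        * ‖Q w (g t).1 (g t).2.1‖⁻¹ < 1 / (s + 1) := by
    intro s t hts
    cases s with
    | zero =>
      have ht0 : t = 0 := by omega
      subst ht0
      have h := hfN2 0 {(fi (lyM C' 0 0) ∅, fj (lyM C' 0 0) ∅)} 0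
        ((g 0).1, (g 0).2.1) (by rw [hg0]; exact Finset.mem_singleton_self _)
      have e : (g 0).2.2 = fN 0 {(fi (lyM C' 0 0) ∅, fj (lyM C' 0 0) ∅)} 0 := by rw [hg0]
      rw [e]
      exact h
    | succ u =>
      have e3 : (g (u+1)).2.2 = fN ((g u).2.2)
          (insert ((g (u+1)).1, (g (u+1)).2.1)
            ((Finset.range (u+1)).image fun t => ((g t).1, (g t).2.1))) (u+1) := by
        rw [hgs u]
      rw [e3]
      rcases Nat.eq_or_lt_of_le hts with heq | hlt
      · subst heq
        exact hfN2 _ _ _ ((g (u+1)).1, (g (u+1)).2.1) (Finset.mem_insert_self _ _)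
      · exact hfN2 _ _ _ ((g t).1, (g t).2.1)
          (Finset.mem_insert_of_mem
            (Finset.mem_image.mpr ⟨t, Finset.mem_range.mpr (by omega), rfl⟩))
  -- quantities
  have hApos : ∀ s, (0:ℝ) < ‖Q w (g s).1 (g s).2.1‖ := fun s => Q_norm_pos hw0 _ _
  have hlyM_ge : ∀ (s Np : ℕ) (m : ℕ), m ≤ Np + s + 1 →
      (2:ℝ)^(s+1) * C' ^ m ≤ lyM C' s Np := by
    intro s Np m hm
    unfold lyM
    have hnn : (0:ℝ) ≤ 2^(s+1) := by positivity
    exact mul_le_mul_of_nonneg_left (pow_le_pow_right₀ h1C.le hm) hnn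
  have hA_geS : ∀ (u m : ℕ), m ≤ (g u).2.2 + u + 2 →
      (2:ℝ)^(u+1+1) * C' ^ m ≤ ‖Q w (g (u+1)).1 (g (u+1)).2.1‖ := fun u m hm =>
    le_trans (hlyM_ge (u+1) ((g u).2.2) m (by omega)) (hIM u)
  have hA_ge : ∀ (s m : ℕ), m ≤ s + 1 →
      (2:ℝ)^(s+1) * C' ^ m ≤ ‖Q w (g s).1 (g s).2.1‖ := by
    intro s m hm
    cases s with
    | zero => exact le_trans (hlyM_ge 0 0 m (by omega)) hIM0
    | succ u => exact hA_geS u m (by omega)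
  have hA2 : ∀ s, (2:ℝ)^(s+1) ≤ ‖Q w (g s).1 (g s).2.1‖ := by
    intro s
    have := hA_ge s 0 (by omega)
    simpa using this
  have hsuffix : ∀ (p : ℤ) (N : ℕ), ‖Q w (p - N) (p - 1)‖ ≤ C' ^ N := by
    intro p N
    have h := Q_norm_le hC' h0C.le (p - N) (p - 1)
    rwa [show ((p-1) + 1 - (p - (N:ℤ))).toNat = N by omega] at h
  have hpiinj : Function.Injective (fun s : ℕ => (g s).2.1 + 1) := by
    intro a b hab
    rcases lt_trichotomy a b with h | h | h
    · exact absurd hab (hIF b a h)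
    · exact h
    · exact absurd hab.symm (hIF a b h)
  -- the vector z
  set zf : ℤ → 𝕂 := fun k =>
    if h : ∃ s : ℕ, (g s).2.1 + 1 = k
    then ((‖Q w (g h.choose).1 (g h.choose).2.1‖⁻¹ : ℝ) : 𝕂) else 0 with hzfdef
  have hzf1 : ∀ s : ℕ, zf ((g s).2.1 + 1) = ((‖Q w (g s).1 (g s).2.1‖⁻¹ : ℝ) : 𝕂) := by
    intro s
    have hex : ∃ s' : ℕ, (g s').2.1 + 1 = (g s).2.1 + 1 := ⟨s, rfl⟩
    rw [hzfdef]
    simp only [dif_pos hex]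
    have : hex.choose = s := hpiinj hex.choose_spec
    rw [this]
  have hzf0 : ∀ k, (¬ ∃ s : ℕ, (g s).2.1 + 1 = k) → zf k = 0 := by
    intro k hk
    rw [hzfdef]
    simp only [dif_neg hk]
  have hzfnorm : ∀ s : ℕ, ‖zf ((g s).2.1 + 1)‖ = ‖Q w (g s).1 (g s).2.1‖⁻¹ := by
    intro s
    rw [hzf1 s, RCLike.norm_ofReal, abs_of_nonneg (inv_nonneg.mpr (hApos s).le)]
  have hc0 : Tendsto zf cofinite (𝓝 (0:𝕂)) := by
    rw [Metric.tendsto_nhds]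
    intro ε hε
    rw [eventually_cofinite]
    obtain ⟨n₀, hn₀⟩ := pow_unbounded_of_one_lt (1/ε) (one_lt_two (α := ℝ))
    apply Set.Finite.subset (Set.Finite.image (fun s => (g s).2.1 + 1) (Set.finite_Iio n₀))
    intro k hk
    simp only [Set.mem_setOf_eq, not_lt] at hk
    by_cases hex : ∃ s : ℕ, (g s).2.1 + 1 = k
    · obtain ⟨s, hs⟩ := hex
      refine ⟨s, ?_, hs⟩
      have h1 : ε ≤ ‖zf k‖ := by rwa [dist_zero_right] at hk
      rw [← hs, hzfnorm s] at h1
      have h2 : ‖Q w (g s).1 (g s).2.1‖ ≤ 1/ε := by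
        rw [le_div_iff₀ hε]
        have h3 := mul_le_mul_of_nonneg_right h1 (hApos s).le
        rw [inv_mul_cancel₀ (ne_of_gt (hApos s))] at h3
        nlinarith [hApos s]
      have h4 : (2:ℝ)^(s+1) < 2^n₀ := lt_of_le_of_lt (le_trans (hA2 s) h2) hn₀
      have h5 : s + 1 < n₀ := by
        by_contra hcon
        push_neg at hcon
        have := pow_le_pow_right₀ (one_le_two (α := ℝ)) hcon
        linarith
      exact Set.mem_Iio.mpr (by omega)
    · rw [hzf0 k hex, dist_zero_right, norm_zero] at hk
      linarith
  set z : X 𝕂 := mk zf hc0 with hzdef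
  have hcoordz : ∀ (n : ℕ) (k : ℤ), (T^[n] z) k = Q w k (k + n - 1) * zf (k + n) := by
    intro n k
    rw [iter_apply w T hT n z k]
    simp only [hzdef, mk_apply]
  have hup : ∀ r : ℕ, ‖T^[(g r).2.2] z‖ ≤ 1 / (r + 1) := by
    intro r
    refine norm_le_of _ (by positivity) fun k => ?_
    rw [hcoordz, norm_mul]
    by_cases hk : ∃ s : ℕ, (g s).2.1 + 1 = k + ((g r).2.2 : ℤ)
    · obtain ⟨s, hs⟩ := hk
      have hknorm : ‖zf (k + ((g r).2.2 : ℤ))‖ = ‖Q w (g s).1 (g s).2.1‖⁻¹ := by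
        rw [← hs]; exact hzfnorm s
      rw [hknorm]
      have hidx : k + ((g r).2.2 : ℤ) - 1 = (g s).2.1 + 1 - 1 := by omega
      have hkval : k = (g s).2.1 + 1 - ((g r).2.2 : ℤ) := by omega
      rw [hidx, hkval]
      rcases le_or_gt s r with hsr | hrs
      · exact le_of_lt (hIN2 r s hsr)
      · obtain ⟨u, rfl⟩ : ∃ u, s = u + 1 := ⟨s - 1, by omega⟩
        have hNle : (g r).2.2 ≤ (g u).2.2 := hNmono.monotone (Nat.lt_succ_iff.mp hrs)
        have h1 : ‖Q w ((g (u+1)).2.1 + 1 - ((g r).2.2 : ℤ)) ((g (u+1)).2.1 + 1 - 1)‖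
            ≤ C' ^ ((g r).2.2) := hsuffix ((g (u+1)).2.1 + 1) ((g r).2.2)
        have h2 : (2:ℝ)^(u+1+1) * C' ^ ((g r).2.2) ≤ ‖Q w (g (u+1)).1 (g (u+1)).2.1‖ :=
          hA_geS u ((g r).2.2) (by omega)
        have hinv : ‖Q w (g (u+1)).1 (g (u+1)).2.1‖⁻¹
            ≤ ((2:ℝ)^(u+1+1) * C' ^ ((g r).2.2))⁻¹ :=
          inv_anti₀ (by positivity) h2
        calc ‖Q w ((g (u+1)).2.1 + 1 - ((g r).2.2 : ℤ)) ((g (u+1)).2.1 + 1 - 1)‖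
              * ‖Q w (g (u+1)).1 (g (u+1)).2.1‖⁻¹
            ≤ C' ^ ((g r).2.2) * ((2:ℝ)^(u+1+1) * C' ^ ((g r).2.2))⁻¹ := by
              apply mul_le_mul h1 hinv (by positivity) (by positivity)
          _ = ((2:ℝ)^(u+1+1))⁻¹ := by
              have hC0' : C' ^ ((g r).2.2) ≠ 0 := by positivity
              rw [mul_inv, mul_comm (((2:ℝ)^(u+1+1))⁻¹), ← mul_assoc,
                mul_inv_cancel₀ hC0', one_mul]
          _ ≤ 1 / (r + 1) := by
              have ha : ((r:ℝ) + 1) ≤ 2^(u+1+1) := by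
                have h3 : ((u:ℝ)+1+1) ≤ 2^(u+1+1) := by
                  exact_mod_cast (Nat.lt_two_pow_self (n := u+1+1)).le
                have h4 : (r:ℝ) ≤ (u:ℝ) + 1 := by exact_mod_cast hrs.le
                linarith
              rw [inv_eq_one_div]
              exact one_div_le_one_div_of_le (by positivity) ha
    · rw [hzf0 _ hk, norm_zero, mul_zero]
      positivity
  have hlow : ∀ s : ℕ, 1 ≤ ‖T^[((g s).2.1 + 1 - (g s).1).toNat] z‖ := by
    intro s
    have hIles := hIle s
    have hcoord := hcoordz (((g s).2.1 + 1 - (g s).1).toNat) (g s).1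
    rw [show (g s).1 + ((((g s).2.1 + 1 - (g s).1).toNat : ℤ)) - 1 = (g s).2.1 by omega,
        show (g s).1 + ((((g s).2.1 + 1 - (g s).1).toNat : ℤ)) = (g s).2.1 + 1 by omega]
      at hcoord
    have hval : ‖(T^[((g s).2.1 + 1 - (g s).1).toNat] z) (g s).1‖ = 1 := by
      rw [hcoord, norm_mul, hzfnorm s, mul_inv_cancel₀ (ne_of_gt (hApos s))]
    calc (1:ℝ) = ‖(T^[((g s).2.1 + 1 - (g s).1).toNat] z) (g s).1‖ := hval.symm
      _ ≤ ‖T^[((g s).2.1 + 1 - (g s).1).toNat] z‖ := coord_le _ _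
  have hLge : ∀ s : ℕ, s + 1 ≤ ((g s).2.1 + 1 - (g s).1).toNat := by
    intro s
    have h1 : C'^(s+1) ≤ ‖Q w (g s).1 (g s).2.1‖ := by
      have h0 := hA_ge s (s+1) (by omega)
      have h5 : (1:ℝ) * C'^(s+1) ≤ 2^(s+1) * C'^(s+1) := by
        apply mul_le_mul_of_nonneg_right ?_ (by positivity)
        exact one_le_pow₀ one_le_two
      rw [one_mul] at h5
      linarith
    have h2 : ‖Q w (g s).1 (g s).2.1‖ ≤ C' ^ (((g s).2.1 + 1 - (g s).1).toNat) :=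
      Q_norm_le hC' h0C.le _ _
    exact (pow_le_pow_iff_right₀ h1C).mp (le_trans h1 h2)
  refine ⟨z, ?_, 1, one_pos, ?_⟩
  · intro δ hδ
    rw [frequently_atTop]
    intro a
    obtain ⟨m, hm⟩ := exists_nat_gt (1/δ)
    refine ⟨(g (max a m)).2.2, ?_, ?_⟩
    · calc a ≤ max a m := le_max_left _ _
        _ ≤ (g (max a m)).2.2 := hNmono.le_apply
    · calc ‖T^[(g (max a m)).2.2] z‖ ≤ 1/((max a m : ℕ) + 1) := hup (max a m)
        _ < δ := by
          have h1 : 1/δ < ((max a m : ℕ):ℝ) + 1 := by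
            have h2 : (m:ℝ) ≤ ((max a m : ℕ):ℝ) := by exact_mod_cast le_max_right a m
            linarith
          have h3 := one_div_lt_one_div_of_lt (by positivity) h1
          rwa [one_div_one_div] at h3
  · rw [frequently_atTop]
    intro a
    exact ⟨((g a).2.1 + 1 - (g a).1).toNat, by have := hLge a; omega, hlow a⟩

lemma forward (w : ℤ → 𝕂) (hw0 : ∀ n, w n ≠ 0)
    (T : X 𝕂 → X 𝕂) (hT : ∀ x n, T x n = w n * x (n + 1))
    (x y : X 𝕂) (hxy : x ≠ y)
    (hp1 : Filter.liminf (fun n : ℕ => edist (T^[n] x) (T^[n] y)) Filter.atTop = 0)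
    (hp2 : 0 < Filter.limsup (fun n : ℕ => edist (T^[n] x) (T^[n] y)) Filter.atTop) :
    (Filter.liminf
        (fun n : ℕ => (‖∏ t ∈ Finset.Icc (-(n : ℤ)) (-1), w t‖₊ : ℝ≥0∞))
        Filter.atTop = 0 ∧
      (⨆ (i : ℤ) (j : ℤ) (_ : i ≤ j), (‖∏ t ∈ Finset.Icc i j, w t‖₊ : ℝ≥0∞)) = ⊤) := by
  set z : X 𝕂 := x - y with hz
  have hfreq_small : ∀ δ : ℝ, 0 < δ → ∃ᶠ n in atTop, ‖T^[n] z‖ < δ := by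
    intro δ hδ
    have h1 : Filter.liminf (fun n : ℕ => edist (T^[n] x) (T^[n] y)) Filter.atTop
        < ENNReal.ofReal δ := by
      rw [hp1]; exact ENNReal.ofReal_pos.mpr hδ
    refine (frequently_lt_of_liminf_lt (by isBoundedDefault) h1).mono fun n hn => ?_
    have h2 := edist_lt_ofReal.mp hn
    rwa [dist_eq_norm, iter_sub w T hT] at h2
  constructor
  · -- (a)
    by_contra ha
    have hpos : 0 < Filter.liminf
        (fun n : ℕ => (‖∏ t ∈ Finset.Icc (-(n : ℤ)) (-1), w t‖₊ : ℝ≥0∞)) Filter.atTop :=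
      pos_iff_ne_zero.mpr ha
    obtain ⟨cE, hc0, hclt⟩ := exists_between hpos
    have hev := Filter.eventually_lt_of_lt_liminf hclt
    set cR : ℝ := (min cE 1).toReal with hcRdef
    have hcR : 0 < cR := by
      apply ENNReal.toReal_pos
      · exact (lt_min hc0 zero_lt_one).ne'
      · exact ne_top_of_le_ne_top one_ne_top (min_le_right _ _)
    have hevR : ∀ᶠ n : ℕ in atTop, cR ≤ ‖Q w (-(n : ℤ)) (-1)‖ := by
      refine hev.mono fun n hn => ?_
      have h1 : min cE 1 ≤ (‖Q w (-(n : ℤ)) (-1)‖₊ : ℝ≥0∞) :=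
        le_trans (min_le_left _ _) hn.le
      have h2 := ENNReal.toReal_mono ENNReal.coe_ne_top h1
      simpa using h2
    obtain ⟨N₀, hN₀⟩ := eventually_atTop.mp hevR
    have hz0 : ∀ k : ℤ, z k = 0 := by
      intro k
      by_contra hzk
      obtain ⟨ck, hck, hckE⟩ := Q_shift hw0 k
      have hevlow : ∀ᶠ n : ℕ in atTop, ck * cR * ‖z k‖ ≤ ‖T^[n] z‖ := by
        have hev2 : ∀ᶠ n : ℕ in atTop, (max (|k| + 1) (k + N₀) : ℤ) ≤ (n : ℤ) :=
          eventually_atTop.mpr ⟨(max (|k| + 1) (k + N₀)).toNat, fun n hn => by omega⟩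
        filter_upwards [hev2] with n hn
        have h1 : ‖Q w (k - (n : ℤ)) (k - 1)‖ = ck * ‖Q w (k - (n : ℤ)) (-1)‖ :=
          hckE n (by omega)
        have h2 : cR ≤ ‖Q w (k - (n : ℤ)) (-1)‖ := by
          have h3 := hN₀ ((n : ℤ) - k).toNat (by omega)
          have e : k - (n : ℤ) = -((((n : ℤ) - k).toNat : ℤ)) := by omega
          rw [e]; exact h3
        calc ck * cR * ‖z k‖ ≤ ck * ‖Q w (k - (n : ℤ)) (-1)‖ * ‖z k‖ := by
              exact mul_le_mul_of_nonneg_right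
                (mul_le_mul_of_nonneg_left h2 hck.le) (norm_nonneg _)
          _ = ‖Q w (k - (n : ℤ)) (k - 1)‖ * ‖z k‖ := by rw [h1]
          _ = ‖(T^[n] z) (k - (n : ℤ))‖ := by
              rw [iter_apply w T hT n z (k - (n : ℤ)), norm_mul]
              have e1 : k - (n : ℤ) + (n : ℤ) - 1 = k - 1 := by ring
              have e2 : k - (n : ℤ) + (n : ℤ) = k := by ring
              rw [e1, e2]
          _ ≤ ‖T^[n] z‖ := coord_le _ _
      have hpos2 : 0 < ck * cR * ‖z k‖ := by
        have := norm_pos_iff.mpr hzk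
        positivity
      obtain ⟨n, hn1, hn2⟩ := ((hfreq_small _ hpos2).and_eventually hevlow).exists
      linarith
    have : z = 0 := by
      ext k
      rw [hz0 k, ZeroAtInftyContinuousMap.coe_zero]
      rfl
    exact hxy (sub_eq_zero.mp (hz ▸ this))
  · -- (b)
    by_contra hbne
    set Sup := ⨆ (i : ℤ) (j : ℤ) (_ : i ≤ j), (‖∏ t ∈ Finset.Icc i j, w t‖₊ : ℝ≥0∞) with hSup
    have hlt : Sup ≠ ⊤ := hbne
    set M : ℝ := Sup.toReal with hM
    have hMle : ∀ i j : ℤ, i ≤ j → ‖Q w i j‖ ≤ M := by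
      intro i j hij
      have h1 : (‖∏ t ∈ Finset.Icc i j, w t‖₊ : ℝ≥0∞) ≤ Sup := by
        calc (‖∏ t ∈ Finset.Icc i j, w t‖₊ : ℝ≥0∞)
            ≤ ⨆ (_ : i ≤ j), (‖∏ t ∈ Finset.Icc i j, w t‖₊ : ℝ≥0∞) :=
              le_iSup (fun _ : i ≤ j => (‖∏ t ∈ Finset.Icc i j, w t‖₊ : ℝ≥0∞)) hij
          _ ≤ ⨆ (j : ℤ) (_ : i ≤ j), (‖∏ t ∈ Finset.Icc i j, w t‖₊ : ℝ≥0∞) :=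
              le_iSup (fun j => ⨆ (_ : i ≤ j), (‖∏ t ∈ Finset.Icc i j, w t‖₊ : ℝ≥0∞)) j
          _ ≤ Sup := le_iSup (fun i => ⨆ (j : ℤ) (_ : i ≤ j),
              (‖∏ t ∈ Finset.Icc i j, w t‖₊ : ℝ≥0∞)) i
      have h2 := ENNReal.toReal_mono hlt h1
      rw [ENNReal.coe_toReal, coe_nnnorm] at h2
      exact h2
    have hop : ∀ (m : ℕ) (u : X 𝕂), ‖T^[m] u‖ ≤ max M 1 * ‖u‖ := by
      intro m u
      refine norm_le_of _ (by positivity) fun k => ?_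
      rw [iter_apply w T hT, norm_mul]
      rcases Nat.eq_zero_or_pos m with hm | hm
      · subst hm
        rw [Q_empty w (by omega), norm_one, one_mul]
        calc ‖u (k + (0:ℕ))‖ ≤ ‖u‖ := coord_le _ _
          _ ≤ max M 1 * ‖u‖ := le_mul_of_one_le_left (norm_nonneg _) (le_max_right _ _)
      · apply mul_le_mul (le_trans (hMle k (k + (m:ℕ) - 1) (by omega)) (le_max_left _ _))
          (coord_le _ _) (norm_nonneg _) (by positivity)
    have hT0 : Tendsto (fun n : ℕ => edist (T^[n] x) (T^[n] y)) atTop (𝓝 0) := by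
      rw [ENNReal.tendsto_nhds_zero]
      intro ε hε
      rcases eq_or_ne ε ⊤ with hε2 | hε2
      · exact Eventually.of_forall fun n => hε2 ▸ le_top
      set δ : ℝ := ε.toReal with hδdef
      have hδ : 0 < δ := ENNReal.toReal_pos hε.ne' hε2
      obtain ⟨n₀, hn₀⟩ := (hfreq_small (δ / (max M 1)) (by positivity)).exists
      filter_upwards [eventually_ge_atTop n₀] with n hn
      have h1 : ‖T^[n] z‖ ≤ max M 1 * ‖T^[n₀] z‖ := by
        conv_lhs => rw [show n = (n - n₀) + n₀ by omega]
        rw [Function.iterate_add_apply]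
        exact hop _ _
      have h2 : ‖T^[n] z‖ < δ := by
        calc ‖T^[n] z‖ ≤ max M 1 * ‖T^[n₀] z‖ := h1
          _ < max M 1 * (δ / max M 1) := by
              apply mul_lt_mul_of_pos_left hn₀ (by positivity)
          _ = δ := by field_simp
      rw [edist_dist]
      calc ENNReal.ofReal (dist (T^[n] x) (T^[n] y)) ≤ ENNReal.ofReal δ := by
            apply ENNReal.ofReal_le_ofReal
            rw [dist_eq_norm, iter_sub w T hT]
            exact h2.le
        _ = ε := ENNReal.ofReal_toReal hε2
    rw [hT0.limsup_eq] at hp2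
    exact lt_irrefl 0 hp2


end LYBS

theorem bilateral_shift_c0_liYorke_iff
    {𝕂 : Type} [RCLike 𝕂] (w : ℤ → 𝕂) (hwb : ∃ C : ℝ, ∀ n, ‖w n‖ ≤ C)
    (hw0 : ∀ n, w n ≠ 0)
    (T : ZeroAtInftyContinuousMap ℤ 𝕂 → ZeroAtInftyContinuousMap ℤ 𝕂)
    (hT : ∀ x n, T x n = w n * x (n + 1)) :
    LiYorkeChaotic T ↔
      (Filter.liminf
          (fun n : ℕ => (‖∏ t ∈ Finset.Icc (-(n : ℤ)) (-1), w t‖₊ : ℝ≥0∞))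
          Filter.atTop = 0 ∧
        (⨆ (i : ℤ) (j : ℤ) (_ : i ≤ j), (‖∏ t ∈ Finset.Icc i j, w t‖₊ : ℝ≥0∞)) = ⊤) := by
  constructor
  · rintro ⟨S, hSc, hSp⟩
    have hinf : S.Infinite := fun hfin => hSc hfin.countable
    obtain ⟨x, hx, y, hy, hxy⟩ := hinf.nontrivial
    have hp := hSp hx hy hxy
    exact LYBS.forward w hw0 T hT x y hxy hp.1 hp.2
  · rintro ⟨ha, hb⟩
    obtain ⟨C, hC⟩ := hwb
    have hC' : ∀ n, ‖w n‖ ≤ max C 2 := fun n => le_trans (hC n) (le_max_left _ _)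
    have h2C : (2:ℝ) ≤ max C 2 := le_max_right _ _
    by_cases htend : Tendsto (fun n : ℕ => ‖LYBS.Q w (-(n:ℤ)) (-1)‖) atTop (𝓝 0)
    · obtain ⟨z, H1, H2⟩ := LYBS.construct w hw0 hC' h2C htend hb T hT
      exact LYBS.chaotic_of w T hT z H1 H2
    · -- Case: backward products do not tend to zero
      have hfin : {k : ℤ | (if k = 0 then (1:𝕂) else 0) ≠ 0}.Finite := by
        apply Set.Finite.subset (Set.finite_singleton 0)
        intro k hk
        simp only [Set.mem_setOf_eq] at hk
        simp only [Set.mem_singleton_iff]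
        by_contra hne
        exact hk (if_neg hne)
      have htendz : Tendsto (fun k : ℤ => if k = 0 then (1:𝕂) else 0) cofinite (𝓝 0) := by
        have h := Filter.eventually_cofinite.mpr hfin
        refine Filter.Tendsto.congr' ?_ (tendsto_const_nhds (x := (0:𝕂)))
        exact h.mono fun k hk => by simpa using hk.symm
      set e0 : LYBS.X 𝕂 := LYBS.mk (fun k : ℤ => if k = 0 then (1:𝕂) else 0) htendz with he0
      have hnorm : ∀ n : ℕ, ‖T^[n] e0‖ = ‖LYBS.Q w (-(n:ℤ)) (-1)‖ := by
        intro n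
        apply le_antisymm
        · refine LYBS.norm_le_of _ (norm_nonneg _) fun k => ?_
          rw [LYBS.iter_apply w T hT n e0 k]
          by_cases hk0 : k + (n:ℤ) = 0
          · have hkv : k = -(n:ℤ) := by omega
            subst hkv
            have hidx : -(n:ℤ) + (n:ℤ) - 1 = -1 := by ring
            rw [hidx]
            have he : e0 (-(n:ℤ) + (n:ℤ)) = 1 := by
              rw [he0]
              simp only [LYBS.mk_apply]
              rw [if_pos hk0]
            rw [he, mul_one]
          · have he : e0 (k + (n:ℤ)) = 0 := by
              rw [he0]
              simp only [LYBS.mk_apply]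
              rw [if_neg hk0]
            rw [he, mul_zero, norm_zero]
            exact norm_nonneg _
        · have hco := LYBS.iter_apply w T hT n e0 (-(n:ℤ))
          have hidx : -(n:ℤ) + (n:ℤ) - 1 = -1 := by ring
          have hk0 : -(n:ℤ) + (n:ℤ) = 0 := by ring
          rw [hidx] at hco
          have he : e0 (-(n:ℤ) + (n:ℤ)) = 1 := by
            rw [he0]
            simp only [LYBS.mk_apply]
            rw [if_pos hk0]
          rw [he, mul_one] at hco
          calc ‖LYBS.Q w (-(n:ℤ)) (-1)‖ = ‖(T^[n] e0) (-(n:ℤ))‖ := by rw [hco]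
            _ ≤ ‖T^[n] e0‖ := LYBS.coord_le _ _
      have H1 : ∀ δ : ℝ, 0 < δ → ∃ᶠ n in atTop, ‖T^[n] e0‖ < δ := by
        intro δ hδ
        have h1 : Filter.liminf
            (fun n : ℕ => (‖∏ t ∈ Finset.Icc (-(n : ℤ)) (-1), w t‖₊ : ℝ≥0∞))
            Filter.atTop < ENNReal.ofReal δ := by
          rw [ha]; exact ENNReal.ofReal_pos.mpr hδ
        refine (frequently_lt_of_liminf_lt (by isBoundedDefault) h1).mono fun n hn => ?_
        rw [← enorm_eq_nnnorm, ← ofReal_norm] at hn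
        have h2 := (ENNReal.ofReal_lt_ofReal_iff hδ).mp hn
        rw [hnorm n]
        exact h2
      have H2 : ∃ c : ℝ, 0 < c ∧ ∃ᶠ n in atTop, c ≤ ‖T^[n] e0‖ := by
        by_contra hno
        push_neg at hno
        apply htend
        rw [Metric.tendsto_atTop]
        intro ε hε
        have h3 := hno ε hε
        obtain ⟨N, hN⟩ := eventually_atTop.mp h3
        refine ⟨N, fun n hn => ?_⟩
        have h4 := hN n hn
        rw [hnorm n] at h4
        rw [dist_zero_right]
        rwa [Real.norm_eq_abs, abs_of_nonneg (norm_nonneg _)]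
      exact LYBS.chaotic_of w T hT e0 H1 H2
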